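/- Let K → K' be a finite separable extension of Henselian valuation fields of height 1, with O_{K'} the integral closure of O_K in K'. Then: (i) for every x ∈ K' and every ε ∈ m_K, the element ε·Tr_{K'/K}(x) of K' lies in the O_{K'}-submodule of K' generated by the products δ·d·x with δ ∈ m_{K'} and d ∈ 𝔇_{K'/K}; (ii) for every a ∈ m_K and every b ∈ K' with b·m_{K'} ⊆ O_{K'}, the element [K':K]·a·b lies in 𝔇_{K'/K}, where [K':K] is the degree of K'/K. -/

import Mathlib

/-- The different ideal `𝔇_{L/K}` of a finite separable extension of valuation fields, viewed as
the set of its elements in `L`. -/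
def differentSet (K L : Type*) [Field K] [Field L] [Algebra K L]
    (OK : ValuationSubring K) (OL : ValuationSubring L) : Set L :=
  {d | d ∈ OL ∧ ∀ x : L,
    (∀ y : L, y ∈ OL → Algebra.trace K L (x * y) ∈ OK) → d * x ∈ OL}

/-- The codifferent set of the extension. -/
def codiffSet (K K' : Type*) [Field K] [Field K'] [Algebra K K']
    (OK : ValuationSubring K) (OK' : ValuationSubring K') : Set K' :=
  {x | ∀ y : K', y ∈ OK' → Algebra.trace K K' (x * y) ∈ OK}

/-- The maximal ideal of a valuation subring, as a subset of the field. -/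
def mset {K' : Type*} [Field K'] (OK' : ValuationSubring K') : Set K' :=
  {z | ∃ h : z ∈ OK', (⟨z, h⟩ : ↥OK') ∈ IsLocalRing.maximalIdeal ↥OK'}

lemma mset_zero {K' : Type*} [Field K'] (OK' : ValuationSubring K') : (0 : K') ∈ mset OK' := by
  refine ⟨zero_mem _, ?_⟩
  have : (⟨(0:K'), zero_mem _⟩ : ↥OK') = 0 := rfl
  rw [this]
  simp only [IsLocalRing.mem_maximalIdeal, mem_nonunits_iff]
  exact not_isUnit_zero

lemma mset_mul_left {K' : Type*} [Field K'] (OK' : ValuationSubring K') {s z : K'}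
    (hs : s ∈ OK') (hz : z ∈ mset OK') : s * z ∈ mset OK' := by
  obtain ⟨h1, h2⟩ := hz
  refine ⟨mul_mem hs h1, ?_⟩
  have : (⟨s * z, mul_mem hs h1⟩ : ↥OK') = ⟨s, hs⟩ * ⟨z, h1⟩ := rfl
  rw [this]
  exact Ideal.mul_mem_left _ _ h2

lemma mset_add {K' : Type*} [Field K'] (OK' : ValuationSubring K') {z1 z2 : K'}
    (h1 : z1 ∈ mset OK') (h2 : z2 ∈ mset OK') : z1 + z2 ∈ mset OK' := by
  obtain ⟨m1, i1⟩ := h1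
  obtain ⟨m2, i2⟩ := h2
  refine ⟨add_mem m1 m2, ?_⟩
  have : (⟨z1 + z2, add_mem m1 m2⟩ : ↥OK') = ⟨z1, m1⟩ + ⟨z2, m2⟩ := rfl
  rw [this]
  exact add_mem i1 i2

lemma inv_mem_of_not_mset {K' : Type*} [Field K'] (OK' : ValuationSubring K') {z : K'}
    (h : z ∉ mset OK') : z⁻¹ ∈ OK' := by
  rcases OK'.mem_or_inv_mem z with hm | hm
  · have hu : IsUnit (⟨z, hm⟩ : ↥OK') := by
      by_contra hnu
      exact h ⟨hm, (IsLocalRing.mem_maximalIdeal _).2 hnu⟩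
    obtain ⟨u, hu⟩ := hu
    have h1 : (↑(u⁻¹) : ↥OK') * ⟨z, hm⟩ = 1 := by rw [← hu]; exact u.inv_mul
    have h2 : ((↑(u⁻¹) : ↥OK') : K') * z = 1 := by
      have := congrArg (fun t : ↥OK' => (t : K')) h1
      simpa using this
    have h3 : z⁻¹ = ((↑(u⁻¹) : ↥OK') : K') :=
      inv_eq_of_mul_eq_one_right (by rw [mul_comm]; exact h2)
    rw [h3]
    exact SetLike.coe_mem _
  · exact hm

/-- A nonunit of a valuation subring whose inverse is known gives a unit contradiction. -/
lemma isUnit_of_inv_mem {K : Type*} [Field K] (OK : ValuationSubring K) {c : K}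
    (hc : c ∈ OK) (hc' : c⁻¹ ∈ OK) (hc0 : c ≠ 0) : IsUnit (⟨c, hc⟩ : ↥OK) := by
  refine isUnit_iff_exists_inv.2 ⟨⟨c⁻¹, hc'⟩, ?_⟩
  exact Subtype.ext (by simp [mul_inv_cancel₀ hc0])

set_option maxHeartbeats 2000000 in
/-- Let `K → K'` be a finite separable extension of Henselian valuation fields
of height `1`.  Then (i) for every `x ∈ K'` and `ε ∈ m_K` one has
`ε·Tr_{K'/K}(x) ∈ m_{K'}·𝔇_{K'/K}·x` (the `O_{K'}`-submodule of `K'` generated by the products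
`δ·d·x` with `δ ∈ m_{K'}` and `d ∈ 𝔇_{K'/K}`); (ii) `[K':K]·m_K·m_{K'}⁻¹ ⊆ 𝔇_{K'/K}`. -/
theorem statement13
    (K K' : Type*) [Field K] [Field K']
    [Algebra K K'] [FiniteDimensional K K'] [Algebra.IsSeparable K K']
    (OK : ValuationSubring K) (OK' : ValuationSubring K')
    [HenselianLocalRing ↥OK]
    (hK1 : ¬ IsField ↥OK ∧ ∃ v : Valuation K NNReal, ∀ x : K, v x ≤ 1 ↔ x ∈ OK)
    (hOK' : ∀ x : K', x ∈ OK' ↔ ∃ P : Polynomial ↥OK, P.Monic ∧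
      Polynomial.eval₂ ((algebraMap K K').comp OK.subtype) x P = 0) :
    (∀ x : K', ∀ ε : ↥OK, ε ∈ IsLocalRing.maximalIdeal ↥OK →
      algebraMap K K' ((ε : K) * Algebra.trace K K' x) ∈
        Submodule.span ↥OK' {z : K' | ∃ δ : ↥OK', δ ∈ IsLocalRing.maximalIdeal ↥OK' ∧
          ∃ d ∈ differentSet K K' OK OK', z = (δ : K') * d * x}) ∧
    (∀ a : ↥OK, a ∈ IsLocalRing.maximalIdeal ↥OK →
      ∀ b : K', (∀ δ : ↥OK', δ ∈ IsLocalRing.maximalIdeal ↥OK' → b * (δ : K') ∈ OK') →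
      (Module.finrank K K' : K') * algebraMap K K' (a : K) * b ∈
        differentSet K K' OK OK') := by
  classical
  obtain ⟨hnf, v, hv⟩ := hK1
  have hKinj : Function.Injective (algebraMap K K') := (algebraMap K K').injective
  letI : Algebra ↥OK K' := ((algebraMap K K').comp OK.subtype).toAlgebra
  haveI : IsScalarTower ↥OK K K' := IsScalarTower.of_algebraMap_eq fun x => rfl
  have hints : Valuation.Integers OK.valuation ↥OK :=
    ⟨Subtype.coe_injective, fun x => OK.valuation_le_one x,
     fun r hr => ⟨⟨r, OK.mem_of_valuation_le_one r hr⟩, rfl⟩⟩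
  haveI : IsIntegrallyClosed ↥OK := hints.isIntegrallyClosed
  have h_int : ∀ z : K', z ∈ OK' ↔ IsIntegral ↥OK z := by
    intro z
    rw [hOK' z]
    exact ⟨fun ⟨P, h1, h2⟩ => ⟨P, h1, h2⟩, fun ⟨P, h1, h2⟩ => ⟨P, h1, h2⟩⟩
  have hKmem : ∀ c : K, algebraMap K K' c ∈ OK' ↔ c ∈ OK := by
    intro c
    constructor
    · intro h
      have h2 : IsIntegral ↥OK c := (isIntegral_algebraMap_iff hKinj).mp ((h_int _).1 h)
      obtain ⟨y, hy⟩ := IsIntegrallyClosed.isIntegral_iff.mp h2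
      rw [← hy]; exact y.2
    · intro h
      have he : algebraMap K K' c = algebraMap ↥OK K' ⟨c, h⟩ := rfl
      rw [he]
      exact (h_int _).2 isIntegral_algebraMap
  have htrO : ∀ w : K', w ∈ OK' → Algebra.trace K K' w ∈ OK := by
    intro w hw
    have h2 : IsIntegral ↥OK (Algebra.trace K K' w) :=
      Algebra.isIntegral_trace ((h_int w).1 hw)
    obtain ⟨y, hy⟩ := IsIntegrallyClosed.isIntegral_iff.mp h2
    rw [← hy]; exact y.2
  have hscale : ∀ z : K', ∃ a : ↥OK, a ≠ 0 ∧ algebraMap K K' ↑a * z ∈ OK' := by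
    intro z
    have halg : IsAlgebraic ↥OK z := by
      rw [IsFractionRing.isAlgebraic_iff ↥OK K K']
      exact Algebra.IsAlgebraic.isAlgebraic z
    obtain ⟨y, hy, hxy⟩ := IsAlgebraic.exists_integral_multiple halg
    refine ⟨y, hy, ?_⟩
    have he : algebraMap K K' ↑y = algebraMap ↥OK K' y := rfl
    rw [he, ← Algebra.smul_def]
    exact (h_int _).2 hxy
  -- basic facts about the codifferent set
  have hO'C : ∀ z : K', z ∈ OK' → z ∈ codiffSet K K' OK OK' :=
    fun z hz y hy => htrO _ (mul_mem hz hy)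
  have hCsmul : ∀ (u z : K'), u ∈ OK' → z ∈ codiffSet K K' OK OK' →
      u * z ∈ codiffSet K K' OK OK' := by
    intro u z hu hz y hy
    have he : u * z * y = z * (u * y) := by ring
    rw [he]
    exact hz _ (mul_mem hu hy)
  have hC1 : (1 : K') ∈ codiffSet K K' OK OK' := hO'C 1 (one_mem _)
  have hC0 : (0 : K') ∈ codiffSet K K' OK OK' := by
    intro y hy
    rw [zero_mul, map_zero]
    exact zero_mem _
  -- valuation facts
  have hcoe0 : ∀ c : ↥OK, c ≠ 0 → (↑c : K) ≠ 0 := fun c hc h => hc (Subtype.ext h)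
  have hvne : ∀ c : K, c ≠ 0 → v c ≠ 0 := fun c hc => (Valuation.ne_zero_iff v).2 hc
  have hvlt : ∀ c : ↥OK, c ∈ IsLocalRing.maximalIdeal ↥OK → v ↑c < 1 := by
    intro c hc
    have hle : v ↑c ≤ 1 := (hv _).2 c.2
    rcases lt_or_eq_of_le hle with h | h
    · exact h
    · exfalso
      have hc0 : (↑c : K) ≠ 0 := by
        intro h0
        rw [h0, map_zero] at h
        exact zero_ne_one h
      have hinv : (↑c : K)⁻¹ ∈ OK := by
        rw [← hv, map_inv₀, h, inv_one]
      have := isUnit_of_inv_mem OK c.2 hinv hc0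
      rw [IsLocalRing.mem_maximalIdeal, mem_nonunits_iff] at hc
      exact hc (by simpa using this)
  have hmK' : ∀ c : ↥OK, c ∈ IsLocalRing.maximalIdeal ↥OK →
      algebraMap K K' ↑c ∈ mset OK' := by
    intro c hc
    have hmem : algebraMap K K' ↑c ∈ OK' := (hKmem _).2 c.2
    refine ⟨hmem, (IsLocalRing.mem_maximalIdeal _).2 ?_⟩
    intro hu
    by_cases hc0 : (↑c : K) = 0
    · have h0 : (⟨algebraMap K K' ↑c, hmem⟩ : ↥OK') = 0 := Subtype.ext (by simp [hc0])
      rw [h0] at hu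
      exact not_isUnit_zero hu
    · obtain ⟨u, hu⟩ := hu
      have h1 : (↑(u⁻¹) : ↥OK') * ⟨algebraMap K K' ↑c, hmem⟩ = 1 := by rw [← hu]; exact u.inv_mul
      have h2 : ((↑(u⁻¹) : ↥OK') : K') * algebraMap K K' ↑c = 1 := by
        have := congrArg (fun t : ↥OK' => (t : K')) h1
        simpa using this
      have h3 : (algebraMap K K' ↑c)⁻¹ = ((↑(u⁻¹) : ↥OK') : K') :=
        inv_eq_of_mul_eq_one_right (by rw [mul_comm]; exact h2)
      have h4 : algebraMap K K' ((↑c : K)⁻¹) ∈ OK' := by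
        rw [map_inv₀, h3]
        exact SetLike.coe_mem _
      have h5 : (↑c : K)⁻¹ ∈ OK := (hKmem _).1 h4
      have := isUnit_of_inv_mem OK c.2 h5 hc0
      rw [IsLocalRing.mem_maximalIdeal, mem_nonunits_iff] at hc
      exact hc (by simpa using this)
  -- existence of a nonzero element of the maximal ideal of OK
  have hεp : ∃ εp : ↥OK, εp ≠ 0 ∧ εp ∈ IsLocalRing.maximalIdeal ↥OK := by
    by_contra h
    push_neg at h
    apply hnf
    refine ⟨⟨0, 1, zero_ne_one⟩, mul_comm, ?_⟩
    intro a ha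
    have := h a ha
    rw [IsLocalRing.mem_maximalIdeal, mem_nonunits_iff, not_not] at this
    exact isUnit_iff_exists_inv.1 this
  -- boundedness of the codifferent
  have hc0ex : ∃ c0 : ↥OK, c0 ≠ 0 ∧ ∀ z : K', z ∈ codiffSet K K' OK OK' →
      algebraMap K K' ↑c0 * z ∈ OK' := by
    by_contra hcon
    push_neg at hcon
    obtain ⟨εp, hεp0, hεpm⟩ := hεp
    have hεpK : (↑εp : K) ≠ 0 := hcoe0 εp hεp0
    have hCall : ∀ z : K', z ∈ codiffSet K K' OK OK' := by
      intro z
      by_cases hz0 : z = 0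
      · rw [hz0]; exact hC0
      obtain ⟨a, ha0, haz⟩ := hscale z
      have hva : (0 : NNReal) < v ↑a := by
        rw [zero_lt_iff]; exact hvne _ (hcoe0 a ha0)
      obtain ⟨k, hk⟩ := exists_pow_lt_of_lt_one hva (hvlt εp hεpm)
      obtain ⟨y, hyC, hyn⟩ := hcon (εp ^ k) (pow_ne_zero k hεp0)
      have hy0 : y ≠ 0 := by
        intro h0
        rw [h0, mul_zero] at hyn
        exact hyn (zero_mem _)
      have hwinv : (algebraMap K K' ↑(εp ^ k) * y)⁻¹ ∈ OK' :=
        (OK'.mem_or_inv_mem _).resolve_left hyn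
      have hmid : ((↑εp : K) ^ k / ↑a) ∈ OK := by
        rw [← hv, map_div₀, map_pow]
        exact div_le_one_of_le₀ (le_of_lt hk) zero_le
      set u : K' := (algebraMap K K' ↑(εp ^ k) * y)⁻¹ *
        algebraMap K K' ((↑εp : K) ^ k / ↑a) * (algebraMap K K' ↑a * z) with hu
      have humem : u ∈ OK' := mul_mem (mul_mem hwinv ((hKmem _).2 hmid)) haz
      have hkey : u * y = z := by
        rw [hu]
        have h1 : (↑(εp ^ k) : K) = (↑εp : K) ^ k := rfl
        have h2 : algebraMap K K' (↑εp : K) ≠ 0 := by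
          rw [map_ne_zero_iff _ hKinj]
          exact hεpK
        have h3 : algebraMap K K' (↑a : K) ≠ 0 := by
          rw [map_ne_zero_iff _ hKinj]
          exact hcoe0 a ha0
        rw [h1, map_div₀, map_pow]
        field_simp
      rw [← hkey]
      exact hCsmul u y humem hyC
    -- contradiction via nonvanishing of the trace
    have hz0 : ∃ z0 : K', Algebra.trace K K' z0 ≠ 0 := by
      by_contra h
      push_neg at h
      exact Algebra.trace_ne_zero K K' (LinearMap.ext fun z => by simpa using h z)
    obtain ⟨z0, ht0⟩ := hz0
    set t := Algebra.trace K K' z0 with htdef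
    have hC := hCall (algebraMap K K' ((↑εp * t)⁻¹) * z0) 1 (one_mem _)
    rw [mul_one] at hC
    have htr : Algebra.trace K K' (algebraMap K K' ((↑εp * t)⁻¹) * z0)
        = (↑εp * t)⁻¹ * t := by
      rw [← Algebra.smul_def, map_smul, smul_eq_mul]
    rw [htr] at hC
    have hC2 : ((↑εp : K))⁻¹ ∈ OK := by
      have he : (↑εp * t)⁻¹ * t = (↑εp : K)⁻¹ := by
        field_simp
      rwa [he] at hC
    have := isUnit_of_inv_mem OK εp.2 hC2 hεpK
    rw [IsLocalRing.mem_maximalIdeal, mem_nonunits_iff] at hεpm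
    exact hεpm (by simpa using this)
  -- the core construction
  have hcore : ∀ ε2 : ↥OK, ε2 ≠ 0 → ε2 ∈ IsLocalRing.maximalIdeal ↥OK →
      ∀ x : K', x ≠ 0 → ∃ α : K, α ≠ 0 ∧
        x * (algebraMap K K' α)⁻¹ ∈ codiffSet K K' OK OK' ∧
        ∀ y : K', y ∈ codiffSet K K' OK OK' →
          algebraMap K K' (↑ε2 * α) * y * x⁻¹ ∈ mset OK' := by
    intro ε2 hε20 hε2m x hx0
    obtain ⟨c0, hc00, hc0⟩ := hc0ex
    obtain ⟨a, ha0, hax⟩ := hscale x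
    have haK : (↑a : K) ≠ 0 := hcoe0 a ha0
    have hε2K : (↑ε2 : K) ≠ 0 := hcoe0 ε2 hε20
    have hc0K : (↑c0 : K) ≠ 0 := hcoe0 c0 hc00
    -- initial point
    have hP0 : x * (algebraMap K K' ((↑a : K)⁻¹))⁻¹ ∈ codiffSet K K' OK OK' := by
      rw [map_inv₀, inv_inv]
      exact hO'C _ (by rw [mul_comm]; exact hax)
    -- lower bound
    obtain ⟨b, hb0, hbmem⟩ := hscale ((algebraMap K K' ↑c0 * x)⁻¹)
    have hbK : (↑b : K) ≠ 0 := hcoe0 b hb0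
    have hbound : ∀ α : K, α ≠ 0 →
        x * (algebraMap K K' α)⁻¹ ∈ codiffSet K K' OK OK' → v ↑b ≤ v α := by
      intro α hα0 hPα
      have h1 : algebraMap K K' ↑c0 * (x * (algebraMap K K' α)⁻¹) ∈ OK' := hc0 _ hPα
      have h2 : algebraMap K K' ↑b * (algebraMap K K' ↑c0 * x)⁻¹ *
          (algebraMap K K' ↑c0 * (x * (algebraMap K K' α)⁻¹)) ∈ OK' :=
        mul_mem hbmem h1
      have h3 : algebraMap K K' ↑b * (algebraMap K K' ↑c0 * x)⁻¹ *
          (algebraMap K K' ↑c0 * (x * (algebraMap K K' α)⁻¹))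
          = algebraMap K K' (↑b / α) := by
        have hc0' : algebraMap K K' (↑c0 : K) ≠ 0 := by
          rw [map_ne_zero_iff _ hKinj]; exact hc0K
        have hα' : algebraMap K K' α ≠ 0 := by
          rw [map_ne_zero_iff _ hKinj]; exact hα0
        rw [map_div₀]
        field_simp
      rw [h3] at h2
      have h4 : (↑b / α : K) ∈ OK := (hKmem _).1 h2
      have h5 : v (↑b / α) ≤ 1 := (hv _).2 h4
      have h6 : v ↑b = v (↑b / α) * v α := by
        rw [← Valuation.map_mul, div_mul_cancel₀ _ hα0]
      rw [h6]
      calc v (↑b / α) * v α ≤ 1 * v α := by gcongr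
      _ = v α := one_mul _
    -- termination
    have hQQ : ∃ k : ℕ, ¬ (x * (algebraMap K K' ((↑ε2 : K) ^ k * (↑a : K)⁻¹))⁻¹ ∈
        codiffSet K K' OK OK') := by
      have hpos : (0 : NNReal) < v ↑b / v ((↑a : K)⁻¹) := by
        rw [zero_lt_iff]
        exact div_ne_zero (hvne _ hbK) (hvne _ (inv_ne_zero haK))
      obtain ⟨k, hk⟩ := exists_pow_lt_of_lt_one hpos (hvlt ε2 hε2m)
      refine ⟨k, fun hP => ?_⟩
      have hne : ((↑ε2 : K) ^ k * (↑a : K)⁻¹) ≠ 0 :=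
        mul_ne_zero (pow_ne_zero _ hε2K) (inv_ne_zero haK)
      have := hbound _ hne hP
      rw [Valuation.map_mul, Valuation.map_pow] at this
      have h2 : (v ↑ε2) ^ k * v ((↑a:K)⁻¹) < v ↑b := by
        have hva' : (0:NNReal) < v ((↑a:K)⁻¹) := by
          rw [zero_lt_iff]; exact hvne _ (inv_ne_zero haK)
        calc (v ↑ε2) ^ k * v ((↑a:K)⁻¹) < (v ↑b / v ((↑a:K)⁻¹)) * v ((↑a:K)⁻¹) :=
              mul_lt_mul_of_pos_right hk hva'
        _ = v ↑b := by
            rw [div_mul_cancel₀]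
            exact hvne _ (inv_ne_zero haK)
      exact absurd (lt_of_le_of_lt this h2) (lt_irrefl _)
    have hspec := Nat.find_spec hQQ
    have hnne : Nat.find hQQ ≠ 0 := by
      intro h0
      apply hspec
      rw [h0]
      simpa [pow_zero, one_mul] using hP0
    obtain ⟨m, hm⟩ := Nat.exists_eq_succ_of_ne_zero hnne
    have hPα' : x * (algebraMap K K' ((↑ε2 : K) ^ m * (↑a : K)⁻¹))⁻¹ ∈
        codiffSet K K' OK OK' := by
      have hlt : m < Nat.find hQQ := by rw [hm]; exact Nat.lt_succ_self m
      have := Nat.find_min hQQ hlt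
      rwa [not_not] at this
    rw [hm] at hspec
    set α : K := (↑ε2 : K) ^ m * (↑a : K)⁻¹ with hα
    have hα0 : α ≠ 0 := mul_ne_zero (pow_ne_zero _ hε2K) (inv_ne_zero haK)
    have hPα : x * (algebraMap K K' α)⁻¹ ∈ codiffSet K K' OK OK' := hPα'
    have hnext : ¬ (x * (algebraMap K K' ((↑ε2 : K) * α))⁻¹ ∈ codiffSet K K' OK OK') := by
      have he : (↑ε2 : K) * α = (↑ε2 : K) ^ (m + 1) * (↑a : K)⁻¹ := by
        rw [hα, pow_succ]; ring
      rw [he]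
      exact hspec
    refine ⟨α, hα0, hPα, ?_⟩
    intro y hyC
    by_cases hy0 : y = 0
    · rw [hy0, mul_zero, zero_mul]
      exact mset_zero OK'
    by_contra hMz
    have hε2α : algebraMap K K' ((↑ε2 : K) * α) ≠ 0 := by
      rw [map_ne_zero_iff _ hKinj]
      exact mul_ne_zero hε2K hα0
    have hzinv : (algebraMap K K' (↑ε2 * α) * y * x⁻¹)⁻¹ ∈ OK' :=
      inv_mem_of_not_mset OK' hMz
    have hkey : x * (algebraMap K K' ((↑ε2 : K) * α))⁻¹ =
        (algebraMap K K' (↑ε2 * α) * y * x⁻¹)⁻¹ * y := by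
      field_simp
    exact hnext (by rw [hkey]; exact hCsmul _ _ hzinv hyC)
  -- part (i)
  have parti : ∀ x : K', ∀ ε : ↥OK, ε ∈ IsLocalRing.maximalIdeal ↥OK →
      algebraMap K K' ((ε : K) * Algebra.trace K K' x) ∈
        Submodule.span ↥OK' {z : K' | ∃ δ : ↥OK', δ ∈ IsLocalRing.maximalIdeal ↥OK' ∧
          ∃ d ∈ differentSet K K' OK OK', z = (δ : K') * d * x} := by
    intro x ε hε
    by_cases htr : (↑ε : K) * Algebra.trace K K' x = 0
    · rw [htr, map_zero]; exact zero_mem _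
    have hε0 : (↑ε : K) ≠ 0 := fun h => htr (by rw [h, zero_mul])
    have htr0 : Algebra.trace K K' x ≠ 0 := fun h => htr (by rw [h, mul_zero])
    have hx0 : x ≠ 0 := fun h => htr0 (by rw [h, map_zero])
    have hεne : ε ≠ 0 := fun h => hε0 (by rw [h, ZeroMemClass.coe_zero])
    have hmain : ∀ ε2 : ↥OK, ε2 ≠ 0 → ε2 ∈ IsLocalRing.maximalIdeal ↥OK →
        ∃ α β : K, α ≠ 0 ∧ β ∈ OK ∧ Algebra.trace K K' x = α * β ∧
          ∀ y : K', y ∈ codiffSet K K' OK OK' →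
            algebraMap K K' (↑ε2 * α) * y * x⁻¹ ∈ mset OK' := by
      intro ε2 h1 h2
      obtain ⟨α, hα0, hPα, hMα⟩ := hcore ε2 h1 h2 x hx0
      refine ⟨α, Algebra.trace K K' (x * (algebraMap K K' α)⁻¹), hα0, ?_, ?_, hMα⟩
      · have := hPα 1 (one_mem _)
        rwa [mul_one] at this
      · have he : x * (algebraMap K K' α)⁻¹ = α⁻¹ • x := by
          rw [Algebra.smul_def, map_inv₀]; ring
        rw [he, map_smul, smul_eq_mul]
        field_simp
    by_cases hsplit : ∃ c d : ↥OK, c ∈ IsLocalRing.maximalIdeal ↥OK ∧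
        d ∈ IsLocalRing.maximalIdeal ↥OK ∧ d ≠ 0 ∧ (↑ε : K) = ↑c * ↑d
    · -- Case A : ε splits as a product of two elements of the maximal ideal
      obtain ⟨c, d, hcm, hdm, hd0, hcd⟩ := hsplit
      obtain ⟨α, β, hα0, hβ, htrx, hM⟩ := hmain d hd0 hdm
      set dd : K' := algebraMap K K' (↑d * α * β) * x⁻¹ with hdd
      have hddmul : ∀ y : K', y ∈ codiffSet K K' OK OK' → dd * y ∈ OK' := by
        intro y hy
        obtain ⟨hmem, _⟩ := hM y hy
        have he : dd * y = algebraMap K K' β * (algebraMap K K' (↑d * α) * y * x⁻¹) := by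
          rw [hdd, map_mul, map_mul]
          ring
        rw [he]
        exact mul_mem ((hKmem β).2 hβ) hmem
      have hddset : dd ∈ differentSet K K' OK OK' := by
        constructor
        · have := hddmul 1 hC1; rwa [mul_one] at this
        · intro x' hx'
          exact hddmul x' hx'
      obtain ⟨hδmem, hδmax⟩ := hmK' c hcm
      refine Submodule.subset_span ⟨⟨algebraMap K K' ↑c, hδmem⟩, hδmax, dd, hddset, ?_⟩
      show algebraMap K K' (↑ε * Algebra.trace K K' x) = algebraMap K K' ↑c * dd * x
      rw [hdd, hcd, htrx, map_mul, map_mul, map_mul]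
      field_simp
      simp only [map_mul]
      ring
    · -- Case B : no splitting, so OK is a discrete valuation ring
      have hB : ∀ c : ↥OK, c ∈ IsLocalRing.maximalIdeal ↥OK → (↑c * (↑ε : K)⁻¹) ∈ OK := by
        intro c hcm
        by_cases hc0 : c = 0
        · rw [hc0]
          simpa using zero_mem OK
        have hcK : (↑c : K) ≠ 0 := hcoe0 c hc0
        by_contra hnot
        have h1 : ((↑c * (↑ε : K)⁻¹))⁻¹ ∈ OK := (OK.mem_or_inv_mem _).resolve_left hnot
        have h2 : ((↑c * (↑ε : K)⁻¹))⁻¹ = ↑ε * (↑c : K)⁻¹ := by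
          rw [mul_inv, inv_inv]
          ring
        rw [h2] at h1
        set w : ↥OK := ⟨↑ε * (↑c : K)⁻¹, h1⟩ with hw
        have hw0 : w ≠ 0 := by
          intro h0
          have : (↑ε * (↑c : K)⁻¹) = 0 := congrArg Subtype.val h0
          exact hε0 (by
            rcases mul_eq_zero.1 this with h | h
            · exact h
            · exact absurd h (inv_ne_zero hcK))
        have hwm : w ∈ IsLocalRing.maximalIdeal ↥OK := by
          rw [IsLocalRing.mem_maximalIdeal, mem_nonunits_iff]
          intro hu
          obtain ⟨u, hu⟩ := hu
          have hinv1 : (↑(u⁻¹) : ↥OK) * w = 1 := by rw [← hu]; exact u.inv_mul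
          have hinv2 : ((↑(u⁻¹) : ↥OK) : K) * (↑ε * (↑c : K)⁻¹) = 1 := by
            have := congrArg (fun t : ↥OK => (t : K)) hinv1
            simpa [hw] using this
          have hinv3 : ((↑ε * (↑c : K)⁻¹))⁻¹ = ((↑(u⁻¹) : ↥OK) : K) :=
            inv_eq_of_mul_eq_one_right (by rw [mul_comm]; exact hinv2)
          apply hnot
          have h4 : (↑c * (↑ε : K)⁻¹) = ((↑ε * (↑c : K)⁻¹))⁻¹ := by
            rw [mul_inv, inv_inv]; ring
          rw [h4, hinv3]
          exact SetLike.coe_mem _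
        apply hsplit
        refine ⟨c, w, hcm, hwm, hw0, ?_⟩
        show (↑ε : K) = ↑c * (↑ε * (↑c : K)⁻¹)
        rw [mul_comm (↑ε : K) ((↑c : K)⁻¹), ← mul_assoc, mul_inv_cancel₀ hcK, one_mul]
      -- every nonzero element of OK factors as a power of ε times a unit
      have hεK : (↑ε : K) ≠ 0 := hε0
      have hfac : ∀ c : ↥OK, c ≠ 0 → ∃ (k : ℕ) (u : ↥OK), IsUnit u ∧
          (↑c : K) = (↑ε : K) ^ k * ↑u := by
        intro c hc0
        have hcK : (↑c : K) ≠ 0 := hcoe0 c hc0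
        have hex : ∃ k : ℕ, ¬ ((↑c / (↑ε : K) ^ k) ∈ OK) := by
          have hpos : (0 : NNReal) < v ↑c := by
            rw [zero_lt_iff]; exact hvne _ hcK
          obtain ⟨k, hk⟩ := exists_pow_lt_of_lt_one hpos (hvlt ε hε)
          refine ⟨k, fun hmem => ?_⟩
          have h5 : v (↑c / (↑ε : K) ^ k) ≤ 1 := (hv _).2 hmem
          have h6 : v ↑c = v (↑c / (↑ε : K) ^ k) * (v ↑ε) ^ k := by
            rw [← Valuation.map_pow, ← Valuation.map_mul,
              div_mul_cancel₀ _ (pow_ne_zero _ hεK)]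
          have h7 : v ↑c ≤ (v ↑ε) ^ k := by
            rw [h6]
            calc v (↑c / (↑ε:K) ^ k) * (v ↑ε) ^ k ≤ 1 * (v ↑ε) ^ k :=
                  by gcongr
            _ = (v ↑ε) ^ k := one_mul _
          exact absurd (lt_of_le_of_lt h7 hk) (lt_irrefl _)
        have hspec := Nat.find_spec hex
        have hnne : Nat.find hex ≠ 0 := by
          intro h0
          apply hspec
          rw [h0]
          simpa using c.2
        obtain ⟨m, hm⟩ := Nat.exists_eq_succ_of_ne_zero hnne
        have hmem : (↑c / (↑ε : K) ^ m) ∈ OK := by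
          have hlt : m < Nat.find hex := by rw [hm]; exact Nat.lt_succ_self m
          have := Nat.find_min hex hlt
          rwa [not_not] at this
        rw [hm] at hspec
        set u : ↥OK := ⟨↑c / (↑ε : K) ^ m, hmem⟩ with hu
        have hcoeu : (↑u : K) = ↑c / (↑ε : K) ^ m := rfl
        have hunit : IsUnit u := by
          by_contra hnu
          have hum : u ∈ IsLocalRing.maximalIdeal ↥OK := by
            rw [IsLocalRing.mem_maximalIdeal, mem_nonunits_iff]; exact hnu
          have := hB u hum
          apply hspec
          have he : (↑u : K) * (↑ε : K)⁻¹ = ↑c / (↑ε : K) ^ (m + 1) := by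
            rw [hcoeu, pow_succ, ← div_div]
            exact (div_eq_mul_inv _ _).symm
          rwa [he] at this
        refine ⟨m, u, hunit, ?_⟩
        rw [hcoeu, mul_comm, div_mul_cancel₀ _ (pow_ne_zero _ hεK)]
      -- OK is therefore a noetherian (valuation) ring
      haveI : IsNoetherianRing ↥OK := by
        rw [isNoetherianRing_iff_ideal_fg]
        intro I
        by_cases hI : I = ⊥
        · rw [hI]; exact Submodule.fg_bot
        obtain ⟨c1, hc1I, hc10⟩ := Submodule.exists_mem_ne_zero_of_ne_bot hI
        have hexk : ∃ k : ℕ, ∃ c : ↥OK, c ∈ I ∧ c ≠ 0 ∧ ∃ u : ↥OK, IsUnit u ∧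
            (↑c : K) = (↑ε : K) ^ k * ↑u := by
          obtain ⟨k, u, hu, he⟩ := hfac c1 hc10
          exact ⟨k, c1, hc1I, hc10, u, hu, he⟩
        set n0 := Nat.find hexk with hn0
        obtain ⟨c0, hc0I, hc00, u0, hu0, he0⟩ := Nat.find_spec hexk
        refine ⟨{c0}, ?_⟩
        rw [Finset.coe_singleton]
        apply le_antisymm
        · rw [Ideal.span_le]
          intro t ht
          rw [Set.mem_singleton_iff] at ht
          rw [ht]
          exact hc0I
        · intro t htI
          by_cases ht0 : t = 0
          · rw [ht0]; exact zero_mem _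
          obtain ⟨k, u, hu, he⟩ := hfac t ht0
          have hk0 : n0 ≤ k := by
            by_contra hlt
            push_neg at hlt
            exact Nat.find_min hexk hlt ⟨t, htI, ht0, u, hu, he⟩
          obtain ⟨U0, hU0⟩ := hu0
          obtain ⟨U, hU⟩ := hu
          have hU0inv : (↑u0 : K) * ((↑(U0⁻¹) : ↥OK) : K) = 1 := by
            have h1 : (↑U0 : ↥OK) * (↑(U0⁻¹) : ↥OK) = 1 := U0.mul_inv
            have h2 : ((↑U0 : ↥OK) : K) * ((↑(U0⁻¹) : ↥OK) : K) = 1 := by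
              exact_mod_cast congrArg (fun t : ↥OK => (t : K)) h1
            rw [hU0] at h2
            exact h2
          have hpow' : (↑ε : K) ^ (k - n0) * (↑ε : K) ^ n0 = (↑ε : K) ^ k := by
            rw [← pow_add, Nat.sub_add_cancel hk0]
          have hsmem : ((↑ε : K) ^ (k - n0) * ↑u * ((↑(U0⁻¹) : ↥OK) : K)) ∈ OK := by
            exact mul_mem (mul_mem (pow_mem ε.2 _) u.2) (SetLike.coe_mem _)
          rw [Ideal.mem_span_singleton']
          refine ⟨⟨_, hsmem⟩, ?_⟩
          apply Subtype.ext
          show ((↑ε : K) ^ (k - n0) * ↑u * ((↑(U0⁻¹) : ↥OK) : K)) * ↑c0 = (↑t : K)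
          calc ((↑ε : K) ^ (k - n0) * ↑u * ((↑(U0⁻¹) : ↥OK) : K)) * ↑c0
              = ((↑ε : K) ^ (k - n0) * ↑u) * ((↑ε : K) ^ n0) * ((↑u0 : K) * ((↑(U0⁻¹) : ↥OK) : K)) := by
                rw [he0]
                ring
            _ = ((↑ε : K) ^ (k - n0) * ↑u) * ((↑ε : K) ^ n0) * 1 := by rw [hU0inv]
            _ = (↑ε : K) ^ (k - n0) * (↑ε : K) ^ n0 * ↑u := by rw [mul_one]; ring
            _ = (↑ε : K) ^ k * ↑u := by rw [hpow']
            _ = (↑t : K) := he.symm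
      -- and hence OK' is noetherian, so its maximal ideal is principal
      letI : Algebra ↥OK ↥OK' := RingHom.toAlgebra
        { toFun := fun a => (⟨algebraMap K K' ↑a, (hKmem _).2 a.2⟩ : ↥OK')
          map_one' := by apply Subtype.ext; simp
          map_mul' := fun s t => by apply Subtype.ext; simp
          map_zero' := by apply Subtype.ext; simp
          map_add' := fun s t => by apply Subtype.ext; simp }
      haveI : IsScalarTower ↥OK ↥OK' K' := IsScalarTower.of_algebraMap_eq fun a => rfl
      haveI : IsIntegralClosure ↥OK' ↥OK K' :=
        { algebraMap_injective := Subtype.coe_injective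
          isIntegral_iff := fun {z} =>
            ⟨fun h => ⟨⟨z, (h_int z).2 h⟩, rfl⟩,
             fun ⟨y, hy⟩ => hy ▸ (h_int (↑y : K')).1 y.2⟩ }
      haveI : IsNoetherianRing ↥OK' := IsIntegralClosure.isNoetherianRing ↥OK K K' ↥OK'
      have hfg : (IsLocalRing.maximalIdeal ↥OK').FG := IsNoetherian.noetherian _
      have hprinc : (IsLocalRing.maximalIdeal ↥OK').IsPrincipal :=
        IsBezout.isPrincipal_of_FG _ hfg
      obtain ⟨π, hπ⟩ := hprinc.principal
      -- the core construction applied with ε itself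
      obtain ⟨α, β, hα0, hβ, htrx, hM⟩ := hmain ε hεne hε
      set q : K' := algebraMap K K' (↑ε * Algebra.trace K K' x) * x⁻¹ with hq
      have hqM : ∀ y : K', y ∈ codiffSet K K' OK OK' → q * y ∈ mset OK' := by
        intro y hy
        have h1 := hM y hy
        have he : q * y = algebraMap K K' β * (algebraMap K K' (↑ε * α) * y * x⁻¹) := by
          rw [hq, htrx, map_mul, map_mul, map_mul]
          ring
        rw [he]
        exact mset_mul_left OK' ((hKmem β).2 hβ) h1
      have hqm : q ∈ mset OK' := by
        have := hqM 1 hC1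
        rwa [mul_one] at this
      obtain ⟨hqmem, hqmax⟩ := hqm
      have hq0 : q ≠ 0 := by
        rw [hq]
        exact mul_ne_zero (by rw [map_ne_zero_iff _ hKinj]; exact htr) (inv_ne_zero hx0)
      have hπmax : π ∈ IsLocalRing.maximalIdeal ↥OK' := by
        rw [hπ]
        exact Submodule.mem_span_singleton_self π
      have hπ0 : (↑π : K') ≠ 0 := by
        intro h0
        have hπz : π = 0 := Subtype.ext h0
        rw [hπz] at hπ
        have h5 := hqmax
        rw [hπ, Submodule.span_zero_singleton] at h5
        have h6 : (⟨q, hqmem⟩ : ↥OK') = 0 := h5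
        exact hq0 (congrArg Subtype.val h6)
      have hqspan : (⟨q, hqmem⟩ : ↥OK') ∈ Ideal.span ({π} : Set ↥OK') := by
        have h5 := hqmax
        rw [hπ] at h5
        rwa [Ideal.submodule_span_eq] at h5
      obtain ⟨t, ht⟩ := Ideal.mem_span_singleton'.1 hqspan
      have htK : (↑t : K') * ↑π = q := congrArg Subtype.val ht
      have htd : (↑t : K') ∈ differentSet K K' OK OK' := by
        refine ⟨t.2, ?_⟩
        intro x' hx'
        have h2 := hqM x' hx'
        obtain ⟨hmem2, hmax2⟩ := h2
        have hx2span : (⟨q * x', hmem2⟩ : ↥OK') ∈ Ideal.span ({π} : Set ↥OK') := by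
          have h5 := hmax2
          rw [hπ] at h5
          rwa [Ideal.submodule_span_eq] at h5
        obtain ⟨s, hs⟩ := Ideal.mem_span_singleton'.1 hx2span
        have hsK : (↑s : K') * ↑π = q * x' := congrArg Subtype.val hs
        have he : (↑t : K') * x' = ↑s := by
          have h3 : (↑s : K') * ↑π = (↑t : K') * x' * ↑π := by
            rw [hsK, ← htK]; ring
          exact (mul_right_cancel₀ hπ0 h3).symm
        rw [he]
        exact s.2
      refine Submodule.subset_span ⟨π, hπmax, ↑t, htd, ?_⟩
      show algebraMap K K' (↑ε * Algebra.trace K K' x) = ↑π * ↑t * x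
      have : algebraMap K K' (↑ε * Algebra.trace K K' x) = q * x := by
        rw [hq]
        field_simp
      rw [this, ← htK]
      ring
  -- part (ii)
  refine ⟨parti, ?_⟩
  intro a ha b hb
  have h1 := parti 1 a ha
  have htr1 : Algebra.trace K K' (1 : K') = (Module.finrank K K' : K) := by
    rw [show (1 : K') = algebraMap K K' 1 from (map_one _).symm, Algebra.trace_algebraMap]
    simp
  rw [htr1] at h1
  have key : ∀ x' : K', x' ∈ codiffSet K K' OK OK' →
      algebraMap K K' (↑a * (Module.finrank K K' : K)) * x' ∈ mset OK' := by
    intro x' hx'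
    set V : Submodule ↥OK' K' :=
      { carrier := {z : K' | z * x' ∈ mset OK'}
        add_mem' := by
          intro z1 z2 h1 h2
          show (z1 + z2) * x' ∈ mset OK'
          rw [add_mul]
          exact mset_add OK' h1 h2
        zero_mem' := by
          show (0 : K') * x' ∈ mset OK'
          rw [zero_mul]
          exact mset_zero OK'
        smul_mem' := by
          intro c z hz
          have he : (c • z) * x' = (↑c : K') * (z * x') := by
            have h0 : c • z = (↑c : K') * z := rfl
            rw [h0]
            ring
          show (c • z) * x' ∈ mset OK'
          rw [he]
          exact mset_mul_left OK' c.2 hz } with hV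
    have hle : Submodule.span ↥OK' {z : K' | ∃ δ : ↥OK', δ ∈ IsLocalRing.maximalIdeal ↥OK' ∧
        ∃ d ∈ differentSet K K' OK OK', z = (δ : K') * d * 1} ≤ V := by
      rw [Submodule.span_le]
      rintro z ⟨δ, hδ, d, hd, rfl⟩
      show (↑δ * d * 1) * x' ∈ mset OK'
      have hdx : d * x' ∈ OK' := hd.2 x' hx'
      have he : (↑δ * d * 1) * x' = (d * x') * ↑δ := by ring
      rw [he]
      refine mset_mul_left OK' hdx ⟨δ.2, ?_⟩
      rw [Subtype.coe_eta]
      exact hδ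
    exact hle h1
  constructor
  · have h2 := key 1 hC1
    rw [mul_one] at h2
    obtain ⟨hm2, hmax2⟩ := h2
    have h3 := hb ⟨_, hm2⟩ hmax2
    have hre : (Module.finrank K K' : K') * algebraMap K K' ↑a * b =
        b * algebraMap K K' (↑a * (Module.finrank K K' : K)) := by
      rw [map_mul, map_natCast]
      ring
    rw [hre]
    exact h3
  · intro x' hx'
    obtain ⟨hm2, hmax2⟩ := key x' hx'
    have h3 := hb ⟨_, hm2⟩ hmax2
    have hre : (Module.finrank K K' : K') * algebraMap K K' ↑a * b * x' =
        b * (algebraMap K K' (↑a * (Module.finrank K K' : K)) * x') := by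
      rw [map_mul, map_natCast]
      ring
    rw [hre]
    exact h3
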